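/- arXiv:1804.04718 — 2 statements merged into one kernel-verified Lean document; each statement's English description precedes it below -/
import Mathlib

section
/- Let f : ℝ → ℂ be continuous with compact support and differentiable at 0. Then the limit as μ→0+ of ∫_ℝ f(x)/(x + iμ) dx exists and equals P∫_ℝ f(x)/x dx − iπ·f(0), where P∫ denotes the Cauchy principal value (limit as ε→0+ of the integral over |x| ≥ ε). -/
open MeasureTheory Filter

set_option maxHeartbeats 1000000

open MeasureTheory Filter

-- denominator nonzero
lemma sp_den_ne {μ : ℝ} (hμ : 0 < μ) (x : ℝ) : (x : ℂ) + Complex.I * μ ≠ 0 := by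
  intro h
  have := congrArg Complex.im h
  simp at this
  linarith

-- Lemma A: log integral
lemma sp_log_integral {R μ : ℝ} (hR : 0 < R) (hμ : 0 < μ) :
    ∫ x in Set.Icc (-R) R, ((x : ℂ) + Complex.I * μ)⁻¹ =
      Complex.log (R + Complex.I * μ) - Complex.log (-R + Complex.I * μ) := by
  have hle : (-R : ℝ) ≤ R := by linarith
  rw [MeasureTheory.integral_Icc_eq_integral_Ioc, ← intervalIntegral.integral_of_le hle]
  have : ∀ x ∈ Set.uIcc (-R) R,
      HasDerivAt (fun t : ℝ => Complex.log ((t : ℂ) + Complex.I * μ)) ((x : ℂ) + Complex.I * μ)⁻¹ x := by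
    intro x _
    have hmem : (x : ℂ) + Complex.I * μ ∈ Complex.slitPlane := by
      rw [Complex.mem_slitPlane_iff]
      right
      simp [hμ.ne']
    have h1 : HasDerivAt (fun w : ℂ => Complex.log (w + Complex.I * μ))
        ((x : ℂ) + Complex.I * μ)⁻¹ (x : ℂ) := by
      have h := (Complex.hasDerivAt_log hmem).comp (x : ℂ)
        ((hasDerivAt_id (x : ℂ)).add_const (Complex.I * μ))
      rw [mul_one] at h
      exact h
    exact h1.comp_ofReal
  rw [intervalIntegral.integral_eq_sub_of_hasDerivAt this]
  · push_cast; ring_nf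
  · apply Continuous.intervalIntegrable
    exact (Continuous.add Complex.continuous_ofReal continuous_const).inv₀
      (fun x => sp_den_ne hμ x)

lemma sp_tendsto_base (c : ℂ) :
    Tendsto (fun μ : ℝ => c + Complex.I * μ) (nhdsWithin 0 (Set.Ioi 0)) (nhds c) := by
  have h : Continuous (fun μ : ℝ => c + Complex.I * (μ : ℂ)) :=
    continuous_const.add (continuous_const.mul Complex.continuous_ofReal)
  have := h.tendsto 0
  simp only [Complex.ofReal_zero, mul_zero, add_zero] at this
  exact this.mono_left nhdsWithin_le_nhds

-- Lemma B: log limit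
lemma sp_log_limit {R : ℝ} (hR : 0 < R) :
    Tendsto (fun μ : ℝ => Complex.log (R + Complex.I * μ) - Complex.log (-R + Complex.I * μ))
      (nhdsWithin 0 (Set.Ioi 0)) (nhds (-(Real.pi : ℂ) * Complex.I)) := by
  have h1 : Tendsto (fun μ : ℝ => Complex.log (R + Complex.I * μ))
      (nhdsWithin 0 (Set.Ioi 0)) (nhds (Complex.log R)) := by
    have hc : ContinuousAt Complex.log (R : ℂ) :=
      continuousAt_clog (by rw [Complex.mem_slitPlane_iff]; left; simpa using hR)
    exact hc.tendsto.comp (sp_tendsto_base (R : ℂ))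
  have h2 : Tendsto (fun μ : ℝ => Complex.log (-R + Complex.I * μ))
      (nhdsWithin 0 (Set.Ioi 0)) (nhds (Real.log R + Real.pi * Complex.I)) := by
    have key := Complex.tendsto_log_nhdsWithin_im_nonneg_of_re_neg_of_im_zero
      (z := (-R : ℂ)) (by simpa using hR) (by simp)
    have habs : ‖(-R : ℂ)‖ = R := by
      simp [abs_of_pos hR]
    rw [habs] at key
    have hmap : Tendsto (fun μ : ℝ => (-R : ℂ) + Complex.I * μ) (nhdsWithin 0 (Set.Ioi 0))
        (nhdsWithin (-R : ℂ) { z : ℂ | 0 ≤ z.im }) := by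
      apply tendsto_nhdsWithin_of_tendsto_nhds_of_eventually_within
      · exact sp_tendsto_base (-R : ℂ)
      · filter_upwards [self_mem_nhdsWithin] with μ hμ
        simp only [Set.mem_setOf_eq, Complex.add_im, Complex.neg_im, Complex.ofReal_im,
          Complex.mul_im, Complex.I_re, Complex.I_im, Complex.ofReal_re]
        simp only [Set.mem_Ioi] at hμ
        nlinarith
    exact key.comp hmap
  have := h1.sub h2
  have hlogR : Complex.log (R : ℂ) = (Real.log R : ℂ) := by
    rw [← Complex.ofReal_log hR.le]
  rw [hlogR] at this
  convert this using 1
  ring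

-- Lemma C: inv integral zero over symmetric annulus
lemma sp_inv_zero {R ε : ℝ} (hε : 0 < ε) (hεR : ε < R) :
    ∫ x in Set.Icc (-R) (-ε) ∪ Set.Icc ε R, ((x : ℝ)⁻¹ : ℝ) = 0 := by
  have hd : Disjoint (Set.Icc (-R) (-ε)) (Set.Icc ε R) := by
    apply Set.disjoint_left.mpr
    rintro x ⟨_, h2⟩ ⟨h3, _⟩
    linarith
  have hint1 : IntegrableOn (fun x : ℝ => x⁻¹) (Set.Icc (-R) (-ε)) := by
    apply ContinuousOn.integrableOn_compact isCompact_Icc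
    apply ContinuousOn.inv₀ continuousOn_id
    rintro x ⟨_, h2⟩ h
    simp only [id_eq] at h; subst h; linarith
  have hint2 : IntegrableOn (fun x : ℝ => x⁻¹) (Set.Icc ε R) := by
    apply ContinuousOn.integrableOn_compact isCompact_Icc
    apply ContinuousOn.inv₀ continuousOn_id
    rintro x ⟨h1, _⟩ h
    simp only [id_eq] at h; subst h; linarith
  rw [MeasureTheory.setIntegral_union hd measurableSet_Icc hint1 hint2]
  have e1 : ∫ x in Set.Icc (-R) (-ε), (x : ℝ)⁻¹ = Real.log ((-ε) / (-R)) := by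
    rw [MeasureTheory.integral_Icc_eq_integral_Ioc,
      ← intervalIntegral.integral_of_le (by linarith : (-R : ℝ) ≤ -ε)]
    exact integral_inv (by rw [Set.uIcc_of_le (by linarith : (-R:ℝ) ≤ -ε)]; rintro ⟨h1, h2⟩; linarith)
  have e2 : ∫ x in Set.Icc ε R, (x : ℝ)⁻¹ = Real.log (R / ε) := by
    rw [MeasureTheory.integral_Icc_eq_integral_Ioc,
      ← intervalIntegral.integral_of_le (by linarith : ε ≤ R)]
    exact integral_inv (by rw [Set.uIcc_of_le (by linarith : ε ≤ R)]; rintro ⟨h1, h2⟩; linarith)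
  have hR : 0 < R := hε.trans hεR
  rw [e1, e2]
  rw [neg_div_neg_eq, ← Real.log_mul (by positivity) (by positivity)]
  rw [div_mul_div_comm]
  rw [mul_comm ε R]
  rw [div_self (by positivity)]
  simp

open MeasureTheory Filter



/-- Sokhotski–Plemelj formula: for `f : ℝ → ℂ` continuous with compact support and
differentiable at `0`, the limit as `μ → 0⁺` of `∫ f(x)/(x + iμ) dx` exists and equals
`P∫ f(x)/x dx - iπ f(0)`, where the principal value `P∫` is the limit as `ε → 0⁺`
of the integral over `{|x| ≥ ε}`. -/
theorem sokhotski_plemelj (f : ℝ → ℂ) (hf : Continuous f) (hsupp : HasCompactSupport f)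
    (hdiff : DifferentiableAt ℝ f 0) :
    ∃ P : ℂ,
      Tendsto (fun ε : ℝ => ∫ x in {x : ℝ | ε ≤ |x|}, f x / (x : ℂ))
        (nhdsWithin 0 (Set.Ioi 0)) (nhds P) ∧
      Tendsto (fun μ : ℝ => ∫ x : ℝ, f x / ((x : ℂ) + Complex.I * (μ : ℂ)))
        (nhdsWithin 0 (Set.Ioi 0))
        (nhds (P - (Real.pi : ℂ) * Complex.I * f 0)) := by
  classical
  -- bound on f
  obtain ⟨M, hM⟩ := hsupp.exists_bound_of_continuous hf
  have hM0 : 0 ≤ M := (norm_nonneg (f 0)).trans (hM 0)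
  -- support radius
  obtain ⟨R, hR0, hRsub⟩ := hsupp.isBounded.subset_closedBall_lt 0 0
  have hfz : ∀ x : ℝ, x ∉ Set.Icc (-R) R → f x = 0 := by
    intro x hx
    apply image_eq_zero_of_notMem_tsupport
    intro hmem
    apply hx
    have := hRsub hmem
    rw [Metric.mem_closedBall, Real.dist_eq, sub_zero] at this
    exact ⟨neg_le_of_abs_le this, le_of_abs_le this⟩
  -- the slope function
  set g : ℝ → ℂ := fun x => (x : ℂ)⁻¹ * (f x - f 0) with hg_def
  have hg_meas : AEStronglyMeasurable g volume := by
    apply Measurable.aestronglyMeasurable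
    exact (Complex.measurable_ofReal.inv).mul ((hf.measurable).sub measurable_const)
  -- slope tendsto
  have hslope : Tendsto g (nhdsWithin 0 {(0:ℝ)}ᶜ) (nhds (deriv f 0)) := by
    have := hdiff.hasDerivAt
    rw [hasDerivAt_iff_tendsto_slope] at this
    have hgs : g = slope f 0 := by
      funext x
      simp [g, slope, sub_zero, Complex.real_smul, Complex.ofReal_inv]
    rwa [hgs]
  -- uniform bound for g
  obtain ⟨C, hC⟩ : ∃ C : ℝ, ∀ x : ℝ, x ≠ 0 → ‖g x‖ ≤ C := by
    have : ∀ᶠ x in nhdsWithin 0 {(0:ℝ)}ᶜ, ‖g x‖ ≤ ‖deriv f 0‖ + 1 := by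
      have := hslope.norm.eventually_le_const (by linarith [norm_nonneg (deriv f 0)] :
        ‖deriv f 0‖ < ‖deriv f 0‖ + 1)
      exact this
    rw [eventually_nhdsWithin_iff, Metric.eventually_nhds_iff] at this
    obtain ⟨δ, hδ0, hδ⟩ := this
    refine ⟨max (‖deriv f 0‖ + 1) (2 * M / δ), fun x hx => ?_⟩
    rcases lt_or_ge (dist x 0) δ with h | h
    · exact le_max_of_le_left (hδ h hx)
    · apply le_max_of_le_right
      have hx0 : δ ≤ |x| := by rwa [Real.dist_eq, sub_zero] at h
      have hxpos : (0:ℝ) < |x| := lt_of_lt_of_le hδ0 hx0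
      have : ‖g x‖ = ‖f x - f 0‖ / |x| := by
        simp [g, norm_mul, norm_inv, Complex.norm_real]
        rw [div_eq_inv_mul]
      rw [this]
      apply div_le_div₀ (by linarith) ?_ hδ0 hx0
      calc ‖f x - f 0‖ ≤ ‖f x‖ + ‖f 0‖ := norm_sub_le _ _
        _ ≤ 2 * M := by have := hM x; have := hM 0; linarith
  -- a.e. nonzero
  have hae : ∀ᵐ x : ℝ ∂volume, x ≠ 0 := by
    rw [ae_iff]
    have : {x : ℝ | ¬ x ≠ 0} = {0} := by ext x; simp
    rw [this]
    exact Real.volume_singleton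
  -- g integrable on Icc
  have hg_int : IntegrableOn g (Set.Icc (-R) R) := by
    refine Measure.integrableOn_of_bounded (M := C) ?_ hg_meas ?_
    · exact measure_Icc_lt_top.ne
    · filter_upwards [ae_restrict_of_ae hae] with x hx
      exact hC x hx
  refine ⟨∫ x in Set.Icc (-R) R, g x, ?_, ?_⟩
  · -- principal value part
    have hSmeas : ∀ ε : ℝ, MeasurableSet {x : ℝ | ε ≤ |x|} := by
      intro ε
      exact (isClosed_le continuous_const continuous_abs).measurableSet
    have hkey : ∀ ε : ℝ, 0 < ε → ε < R →
        ∫ x in {x : ℝ | ε ≤ |x|}, f x / (x : ℂ)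
          = ∫ x in Set.Icc (-R) R, ({x : ℝ | ε ≤ |x|}).indicator g x := by
      intro ε hε hεR
      set A : Set ℝ := Set.Icc (-R) (-ε) ∪ Set.Icc ε R with hA
      have hAsub : A ⊆ Set.Icc (-R) R := by
        rintro x (⟨h1, h2⟩ | ⟨h1, h2⟩) <;> constructor <;> linarith
      have hAmeas : MeasurableSet A := measurableSet_Icc.union measurableSet_Icc
      have hAx : ∀ x ∈ A, x ≠ 0 := by
        rintro x (⟨h1, h2⟩ | ⟨h1, h2⟩) h <;> subst h <;> linarith
      -- restrict to A
      have step1 : ∫ x in {x : ℝ | ε ≤ |x|}, f x / (x : ℂ) = ∫ x in A, f x / (x : ℂ) := by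
        rw [← MeasureTheory.integral_indicator (hSmeas ε), ← MeasureTheory.integral_indicator hAmeas]
        congr 1
        funext x
        by_cases hxA : x ∈ A
        · have hxS : x ∈ {x : ℝ | ε ≤ |x|} := by
            rcases hxA with ⟨h1, h2⟩ | ⟨h1, h2⟩
            · simp only [Set.mem_setOf_eq]; rw [abs_of_nonpos (by linarith)]; linarith
            · simp only [Set.mem_setOf_eq]; rw [abs_of_nonneg (by linarith)]; linarith
          rw [Set.indicator_of_mem hxS, Set.indicator_of_mem hxA]
        · rw [Set.indicator_of_notMem hxA]
          by_cases hxS : x ∈ {x : ℝ | ε ≤ |x|}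
          · rw [Set.indicator_of_mem hxS]
            have : f x = 0 := by
              apply hfz
              intro ⟨h1, h2⟩
              simp only [Set.mem_setOf_eq] at hxS
              rcases abs_cases x with ⟨he, _⟩ | ⟨he, _⟩
              · exact hxA (Or.inr ⟨by linarith, h2⟩)
              · exact hxA (Or.inl ⟨h1, by linarith⟩)
            simp [this]
          · rw [Set.indicator_of_notMem hxS]
      -- split on A
      have hgA : IntegrableOn g A := hg_int.mono_set hAsub
      have hinvA : IntegrableOn (fun x : ℝ => ((x : ℂ))⁻¹) A := by
        apply ContinuousOn.integrableOn_compact (isCompact_Icc.union isCompact_Icc)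
        apply ContinuousOn.inv₀ Complex.continuous_ofReal.continuousOn
        intro x hx
        exact_mod_cast fun h => hAx x hx (by exact_mod_cast h)
      have step2 : ∫ x in A, f x / (x : ℂ)
          = (∫ x in A, g x) + f 0 * ∫ x in A, ((x : ℂ))⁻¹ := by
        rw [← MeasureTheory.integral_const_mul, ← MeasureTheory.integral_add hgA (hinvA.const_mul (f 0))]
        apply setIntegral_congr_fun hAmeas
        intro x hx
        have hx0 : (x : ℂ) ≠ 0 := by exact_mod_cast hAx x hx
        field_simp [g]
        simp only [hg_def]
        rw [← mul_assoc, mul_inv_cancel₀ hx0]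
        ring
      have step3 : ∫ x in A, ((x : ℂ))⁻¹ = 0 := by
        have : (fun x : ℝ => ((x : ℂ))⁻¹) = fun x : ℝ => ((x⁻¹ : ℝ) : ℂ) := by
          funext x; rw [Complex.ofReal_inv]
        rw [this]
        have h0 := sp_inv_zero hε hεR
        calc ∫ x in Set.Icc (-R) (-ε) ∪ Set.Icc ε R, ((x⁻¹ : ℝ) : ℂ)
            = ((∫ x in Set.Icc (-R) (-ε) ∪ Set.Icc ε R, (x⁻¹ : ℝ) : ℝ) : ℂ) := integral_ofReal
          _ = 0 := by rw [h0]; simp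
      have step4 : ∫ x in Set.Icc (-R) R, ({x : ℝ | ε ≤ |x|}).indicator g x = ∫ x in A, g x := by
        rw [MeasureTheory.setIntegral_indicator (hSmeas ε)]
        have hset : Set.Icc (-R) R ∩ {x : ℝ | ε ≤ |x|} = A := by
          ext x
          simp only [Set.mem_inter_iff, Set.mem_Icc, Set.mem_setOf_eq, hA, Set.mem_union]
          constructor
          · rintro ⟨⟨h1, h2⟩, h3⟩
            rcases abs_cases x with ⟨he, _⟩ | ⟨he, _⟩
            · right; constructor <;> linarith
            · left; constructor <;> linarith
          · rintro (⟨h1, h2⟩ | ⟨h1, h2⟩)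
            · refine ⟨⟨by linarith, by linarith⟩, ?_⟩
              rw [abs_of_nonpos (by linarith)]; linarith
            · refine ⟨⟨by linarith, by linarith⟩, ?_⟩
              rw [abs_of_nonneg (by linarith)]; linarith
        rw [hset]
      rw [step1, step2, step3, step4]
      ring
    -- DCT
    have hdct : Tendsto (fun ε : ℝ => ∫ x in Set.Icc (-R) R, ({x : ℝ | ε ≤ |x|}).indicator g x)
        (nhdsWithin 0 (Set.Ioi 0)) (nhds (∫ x in Set.Icc (-R) R, g x)) := by
      apply MeasureTheory.tendsto_integral_filter_of_dominated_convergence (fun x => ‖g x‖)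
      · exact Eventually.of_forall fun ε => (hg_meas.restrict).indicator (hSmeas ε)
      · exact Eventually.of_forall fun ε =>
          Eventually.of_forall fun x => norm_indicator_le_norm_self g x
      · exact hg_int.norm
      · filter_upwards [ae_restrict_of_ae hae] with x hx
        have hxpos : 0 < |x| := abs_pos.mpr hx
        apply Tendsto.congr' ?_ (tendsto_const_nhds (x := g x))
        filter_upwards [Ioo_mem_nhdsGT_of_mem ⟨le_refl (0:ℝ), hxpos⟩] with ε hε
        rw [Set.indicator_of_mem]
        exact le_of_lt hε.2
    apply hdct.congr'
    filter_upwards [Ioo_mem_nhdsGT_of_mem ⟨le_refl (0:ℝ), hR0⟩] with ε hε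
    exact (hkey ε hε.1 hε.2).symm
  · -- Sokhotski-Plemelj part
    have hkey : ∀ μ : ℝ, 0 < μ →
        ∫ x : ℝ, f x / ((x : ℂ) + Complex.I * μ)
          = (∫ x in Set.Icc (-R) R, (f x - f 0) / ((x : ℂ) + Complex.I * μ))
            + f 0 * (Complex.log (R + Complex.I * μ) - Complex.log (-R + Complex.I * μ)) := by
      intro μ hμ
      have hcont1 : Continuous fun x : ℝ => (f x - f 0) / ((x : ℂ) + Complex.I * μ) :=
        (hf.sub continuous_const).div
          (Complex.continuous_ofReal.add continuous_const) (fun x => sp_den_ne hμ x)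
      have hcont2 : Continuous fun x : ℝ => ((x : ℂ) + Complex.I * μ)⁻¹ :=
        (Complex.continuous_ofReal.add continuous_const).inv₀ (fun x => sp_den_ne hμ x)
      rw [← MeasureTheory.setIntegral_eq_integral_of_forall_compl_eq_zero
        (s := Set.Icc (-R) R) (fun x hx => by rw [hfz x hx, zero_div])]
      rw [← sp_log_integral hR0 hμ, ← MeasureTheory.integral_const_mul,
        ← MeasureTheory.integral_add (hcont1.integrableOn_Icc) ((hcont2.integrableOn_Icc).const_mul (f 0))]
      apply setIntegral_congr_fun measurableSet_Icc
      intro x _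
      have hx0 : (x : ℂ) + Complex.I * μ ≠ 0 := sp_den_ne hμ x
      field_simp
      ring
    have hdct : Tendsto (fun μ : ℝ => ∫ x in Set.Icc (-R) R, (f x - f 0) / ((x : ℂ) + Complex.I * μ))
        (nhdsWithin 0 (Set.Ioi 0)) (nhds (∫ x in Set.Icc (-R) R, g x)) := by
      apply MeasureTheory.tendsto_integral_filter_of_dominated_convergence (fun x => ‖g x‖)
      · filter_upwards [self_mem_nhdsWithin] with μ hμ
        simp only [Set.mem_Ioi] at hμ
        exact (((hf.sub continuous_const).div
          (Complex.continuous_ofReal.add continuous_const) (fun x => sp_den_ne hμ x)).aestronglyMeasurable).restrict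
      · filter_upwards [self_mem_nhdsWithin] with μ hμ
        simp only [Set.mem_Ioi] at hμ
        filter_upwards [ae_restrict_of_ae hae] with x hx
        have hxpos : 0 < |x| := abs_pos.mpr hx
        have habs : |x| ≤ ‖(x : ℂ) + Complex.I * μ‖ := by
          have := Complex.abs_re_le_norm ((x : ℂ) + Complex.I * μ)
          simpa using this
        have hnorm : ‖g x‖ = ‖f x - f 0‖ / |x| := by
          simp [g, norm_mul, norm_inv, Complex.norm_real]
          rw [div_eq_inv_mul]
        rw [norm_div, hnorm]
        exact div_le_div_of_nonneg_left (norm_nonneg _) hxpos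
          (by simpa using habs)
      · exact hg_int.norm
      · filter_upwards [ae_restrict_of_ae hae] with x hx
        have hx0 : (x : ℂ) ≠ 0 := by exact_mod_cast hx
        have hden : Tendsto (fun μ : ℝ => (x : ℂ) + Complex.I * μ)
            (nhdsWithin 0 (Set.Ioi 0)) (nhds (x : ℂ)) := sp_tendsto_base (x : ℂ)
        have := Tendsto.div (tendsto_const_nhds (x := f x - f 0)) hden hx0
        convert this using 1
        · rfl
        · show nhds ((x : ℂ)⁻¹ * (f x - f 0)) = nhds ((f x - f 0) / (x : ℂ))
          rw [div_eq_mul_inv, mul_comm]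
    have h := hdct.add ((tendsto_const_nhds (x := f 0)).mul (sp_log_limit hR0))
    have heq : (∫ x in Set.Icc (-R) R, g x) - (Real.pi : ℂ) * Complex.I * f 0
        = (∫ x in Set.Icc (-R) R, g x) + f 0 * (-(Real.pi : ℂ) * Complex.I) := by ring
    rw [heq]
    apply h.congr'
    filter_upwards [self_mem_nhdsWithin] with μ hμ
    simp only [Set.mem_Ioi] at hμ
    exact (hkey μ hμ).symm
end

section
/- Let f : ℝ → ℝ be bounded and continuous, and let z ∈ ℝ. Then lim_{x→0+} (x/√(2π)) · ∫_0^∞ f(z − s) · s^(−3/2) · exp(−x²/(2s)) ds = f(z). -/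
open MeasureTheory Filter

lemma poisson_subst (f : ℝ → ℝ) (z x : ℝ) (hx : 0 < x) :
    (x / Real.sqrt (2 * Real.pi)) *
        ∫ s in Set.Ioi (0:ℝ), f (z - s) * s ^ (-(3:ℝ)/2) * Real.exp (-x ^ 2 / (2 * s))
    = (2 / Real.sqrt Real.pi) *
        ∫ t in Set.Ioi (0:ℝ), f (z - x^2/(2*t^2)) * Real.exp (-t^2) := by
  have hxne : x ≠ 0 := hx.ne'
  have himg : (fun t : ℝ => x^2/(2*t^2)) '' Set.Ioi 0 = Set.Ioi (0:ℝ) := by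
    ext s
    constructor
    · rintro ⟨t, ht, rfl⟩
      have ht' : (0:ℝ) < t := ht
      exact Set.mem_Ioi.mpr (by positivity)
    · intro hs
      have hs' : (0:ℝ) < s := hs
      refine ⟨x / Real.sqrt (2*s), Set.mem_Ioi.mpr (by positivity), ?_⟩
      have h2s : (0:ℝ) ≤ 2*s := by linarith
      simp only [div_pow, Real.sq_sqrt h2s]
      field_simp
  have hderiv : ∀ t ∈ Set.Ioi (0:ℝ),
      HasDerivWithinAt (fun t : ℝ => x^2/(2*t^2)) (-(x^2)/t^3) (Set.Ioi 0) t := by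
    intro t ht
    have ht' : (0:ℝ) < t := ht
    have h : HasDerivAt (fun t : ℝ => x^2/(2*t^2))
        ((0 * (2*t^2) - x^2 * (2*((2:ℕ)*t^(2-1))))/(2*t^2)^2) t :=
      (hasDerivAt_const t (x^2)).div ((hasDerivAt_pow 2 t).const_mul 2) (by positivity)
    refine h.hasDerivWithinAt.congr_deriv ?_
    field_simp
    ring
  have hinj : Set.InjOn (fun t : ℝ => x^2/(2*t^2)) (Set.Ioi 0) := by
    intro a ha b hb h
    have ha' : (0:ℝ) < a := ha
    have hb' : (0:ℝ) < b := hb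
    simp only at h
    have hx2 : (0:ℝ) < x^2 := by positivity
    have hab : a^2 = b^2 := by
      field_simp at h
      nlinarith
    rw [← Real.sqrt_sq ha'.le, ← Real.sqrt_sq hb'.le, hab]
  have key := MeasureTheory.integral_image_eq_integral_abs_deriv_smul
    measurableSet_Ioi hderiv hinj
    (fun s => f (z - s) * s ^ (-(3:ℝ)/2) * Real.exp (-x ^ 2 / (2 * s)))
  rw [himg] at key
  rw [key]
  have hcongr : ∀ t ∈ Set.Ioi (0:ℝ),
      |(-(x^2)/t^3)| • (f (z - x^2/(2*t^2)) * (x^2/(2*t^2)) ^ (-(3:ℝ)/2) *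
        Real.exp (-x ^ 2 / (2 * (x^2/(2*t^2)))))
      = (2*Real.sqrt 2/x) * (f (z - x^2/(2*t^2)) * Real.exp (-t^2)) := by
    intro t ht
    have ht' : (0:ℝ) < t := ht
    have htne : t ≠ 0 := ht'.ne'
    have habs : |(-(x^2)/t^3)| = x^2/t^3 := by
      rw [abs_div, abs_neg, abs_of_pos (by positivity : (0:ℝ) < x^2),
        abs_of_pos (by positivity : (0:ℝ) < t^3)]
    have hexp : -x ^ 2 / (2 * (x^2/(2*t^2))) = -t^2 := by
      field_simp
    have ha : (0:ℝ) < x^2/(2*t^2) := by positivity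
    have hsqrt : Real.sqrt (x^2/(2*t^2)) = x/(Real.sqrt 2 * t) := by
      rw [show x^2/(2*t^2) = (x/(Real.sqrt 2 * t))^2 by
        rw [div_pow, mul_pow, Real.sq_sqrt (by norm_num : (0:ℝ) ≤ 2)]]
      exact Real.sqrt_sq (by positivity)
    have hr : (x^2/(2*t^2)) ^ (-(3:ℝ)/2) = 2*Real.sqrt 2 * t^3 / x^3 := by
      have h1 : (x^2/(2*t^2)) ^ (-(3:ℝ)/2) = ((x^2/(2*t^2)) ^ ((3:ℝ)/2))⁻¹ := by
        rw [← Real.rpow_neg ha.le]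
        norm_num
      have h2 : (x^2/(2*t^2)) ^ ((3:ℝ)/2)
          = (x^2/(2*t^2)) * Real.sqrt (x^2/(2*t^2)) := by
        rw [show (3:ℝ)/2 = 1 + 1/2 by norm_num, Real.rpow_add ha, Real.rpow_one,
          ← Real.rpow_natCast, Real.sqrt_eq_rpow]
      rw [h1, h2, hsqrt, mul_inv, inv_div, inv_div]
      ring
    rw [smul_eq_mul, habs, hexp, hr]
    field_simp
  rw [MeasureTheory.setIntegral_congr_fun measurableSet_Ioi hcongr,
    MeasureTheory.integral_const_mul]
  have hpi : (0:ℝ) < Real.pi := Real.pi_pos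
  rw [show Real.sqrt (2*Real.pi) = Real.sqrt 2 * Real.sqrt Real.pi from
    Real.sqrt_mul (by norm_num) _, ← mul_assoc]
  congr 1
  have h2 : (0:ℝ) < Real.sqrt 2 := by positivity
  have hp : (0:ℝ) < Real.sqrt Real.pi := Real.sqrt_pos.mpr hpi
  field_simp

/-- Boundary-reproducing property of the half-space Poisson-type kernel: if
`f : ℝ → ℝ` is bounded and continuous and `z ∈ ℝ`, then
`lim_{x→0⁺} (x/√(2π)) ∫₀^∞ f(z-s) s^(-3/2) exp(-x²/(2s)) ds = f(z)`. -/
theorem poisson_kernel_boundary_limit (f : ℝ → ℝ) (hf : Continuous f)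
    (hb : ∃ M : ℝ, ∀ x : ℝ, |f x| ≤ M) (z : ℝ) :
    Tendsto (fun x : ℝ => (x / Real.sqrt (2 * Real.pi)) *
        ∫ s in Set.Ioi (0:ℝ), f (z - s) * s ^ (-(3:ℝ)/2) * Real.exp (-x ^ 2 / (2 * s)))
      (nhdsWithin 0 (Set.Ioi 0)) (nhds (f z)) := by
  obtain ⟨M, hM⟩ := hb
  have hint : Tendsto
      (fun x : ℝ => ∫ t in Set.Ioi (0:ℝ), f (z - x^2/(2*t^2)) * Real.exp (-t^2))
      (nhdsWithin 0 (Set.Ioi 0))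
      (nhds (∫ t in Set.Ioi (0:ℝ), f z * Real.exp (-t^2))) := by
    apply MeasureTheory.tendsto_integral_filter_of_dominated_convergence
      (fun t => M * Real.exp (-t^2))
    · filter_upwards with x
      apply Measurable.aestronglyMeasurable
      fun_prop (disch := measurability)
    · filter_upwards with x
      filter_upwards with t
      rw [Real.norm_eq_abs, abs_mul, Real.abs_exp]
      exact mul_le_mul_of_nonneg_right (hM _) (Real.exp_pos _).le
    · have : Integrable (fun t : ℝ => Real.exp (-1 * t^2)) := integrable_exp_neg_mul_sq one_pos
      simp only [neg_one_mul] at this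
      exact (this.const_mul M).integrableOn
    · filter_upwards [MeasureTheory.ae_restrict_mem measurableSet_Ioi] with t ht
      have ht' : (0:ℝ) < t := ht
      have h1 : Tendsto (fun x : ℝ => z - x^2/(2*t^2)) (nhdsWithin 0 (Set.Ioi 0)) (nhds z) := by
        have : Tendsto (fun x : ℝ => z - x^2/(2*t^2)) (nhds 0) (nhds (z - 0^2/(2*t^2))) :=
          (continuous_const.sub ((continuous_pow 2).div_const (2*t^2))).tendsto 0
        simpa using this.mono_left nhdsWithin_le_nhds
      exact ((hf.tendsto z).comp h1).mul tendsto_const_nhds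
  have heval : (2 / Real.sqrt Real.pi) * ∫ t in Set.Ioi (0:ℝ), f z * Real.exp (-t^2) = f z := by
    rw [MeasureTheory.integral_const_mul]
    have : ∫ t in Set.Ioi (0:ℝ), Real.exp (-t^2)
        = Real.sqrt (Real.pi / 1) / 2 := by
      rw [← integral_gaussian_Ioi 1]
      simp
    rw [this]
    have hp : (0:ℝ) < Real.sqrt Real.pi := Real.sqrt_pos.mpr Real.pi_pos
    field_simp
  have := (hint.const_mul (2 / Real.sqrt Real.pi))
  rw [heval] at this
  apply this.congr'
  filter_upwards [self_mem_nhdsWithin] with x hx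
  exact (poisson_subst f z x hx).symm
end
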